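/- arXiv:1503.02914 — 4 statements merged into one kernel-verified Lean document; each statement's English description precedes it below -/
import Mathlib

section
/- Let b : Fin n → ℝ and T : Fin n → Fin n → Fin n → ℝ with T i j k = T i k j for all i, j, k. Fix i, and for each j with b j ≠ b i define R i j = ∑_{k : b k ≠ b i ∧ b k ≠ b j} 2 * (T i j k)^2 / ((b k − b i) * (b k − b j)). Then ∑_{j : b j ≠ b i} (R i j) / (b j − b i) = 0. -/
set_option maxRecDepth 4000


theorem stmt_2 (n : ℕ) (b : Fin n → ℝ) (T : Fin n → Fin n → Fin n → ℝ)
    (hT : ∀ i j k, T i j k = T i k j) (i : Fin n)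
    (R : Fin n → ℝ)
    (hR : ∀ j, b j ≠ b i →
      R j = ∑ k ∈ Finset.univ.filter (fun k => b k ≠ b i ∧ b k ≠ b j),
        2 * (T i j k) ^ 2 / ((b k - b i) * (b k - b j))) :
    ∑ j ∈ Finset.univ.filter (fun j => b j ≠ b i), R j / (b j - b i) = 0 := by
  set A := Finset.univ.filter (fun j => b j ≠ b i) with hA
  set G : Fin n → Fin n → ℝ := fun j k =>
    if b k ≠ b j then 2 * (T i j k) ^ 2 / ((b k - b i) * (b k - b j)) / (b j - b i) else 0
    with hG
  have key : ∀ j ∈ A, R j / (b j - b i) = ∑ k ∈ A, G j k := by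
    intro j hj
    have hji : b j ≠ b i := (Finset.mem_filter.mp hj).2
    rw [hR j hji]
    have : (Finset.univ.filter (fun k => b k ≠ b i ∧ b k ≠ b j))
        = A.filter (fun k => b k ≠ b j) := by
      rw [hA, Finset.filter_filter]
    rw [this, Finset.sum_div, Finset.sum_filter]
  rw [Finset.sum_congr rfl key]
  have anti : ∀ j k, j ∈ A → k ∈ A → G j k = - G k j := by
    intro j k hj hk
    have hji : b j ≠ b i := (Finset.mem_filter.mp hj).2
    have hki : b k ≠ b i := (Finset.mem_filter.mp hk).2
    by_cases h : b k = b j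
    · simp only [hG, if_neg (not_not_intro h), if_neg (not_not_intro h.symm), neg_zero]
    · have h' : b j ≠ b k := fun e => h e.symm
      simp only [hG, if_pos h, if_pos h', hT i k j]
      have e1 : b j - b k = -(b k - b j) := by ring
      simp only [e1, mul_neg, div_neg, neg_div, neg_neg, div_div]
      ring_nf
  have hS : (∑ j ∈ A, ∑ k ∈ A, G j k) = - ∑ j ∈ A, ∑ k ∈ A, G j k := by
    calc (∑ j ∈ A, ∑ k ∈ A, G j k) = ∑ k ∈ A, ∑ j ∈ A, G j k := Finset.sum_comm
      _ = ∑ k ∈ A, ∑ j ∈ A, - G k j := by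
          exact Finset.sum_congr rfl fun k hk => Finset.sum_congr rfl fun j hj =>
            anti j k hj hk
      _ = - ∑ j ∈ A, ∑ k ∈ A, G j k := by
          rw [← Finset.sum_neg_distrib]
          exact Finset.sum_congr rfl fun k _ => by rw [Finset.sum_neg_distrib]
  linarith
end

section
/- Let n ≥ 1 and b : Fin n → ℝ. Suppose that for every index i, ∑_{j : b j ≠ b i} ((b j)^2 − (b i)^2) / ((b j) − (b i))^2 = 0. Then (b i)^2 = (b j)^2 for all i, j; consequently b takes at most two distinct values, and if it takes exactly two distinct values they are λ and −λ for some λ. -/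
theorem stmt_3 (n : ℕ) (hn : 1 ≤ n) (b : Fin n → ℝ)
    (h : ∀ i, ∑ j ∈ Finset.univ.filter (fun j => b j ≠ b i),
        ((b j) ^ 2 - (b i) ^ 2) / ((b j - b i) ^ 2) = 0) :
    (∀ i j, (b i) ^ 2 = (b j) ^ 2) ∧ (∀ i j, b i = b j ∨ b i = -b j) := by
  have hne : Nonempty (Fin n) := ⟨⟨0, hn⟩⟩
  obtain ⟨i0, -, hi0⟩ := Finset.exists_max_image Finset.univ (fun j => (b j) ^ 2)
    ⟨Classical.arbitrary (Fin n), Finset.mem_univ _⟩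
  have key : ∀ j, (b j) ^ 2 = (b i0) ^ 2 := by
    intro j
    by_cases hbj : b j = b i0
    · rw [hbj]
    · have hall := Finset.sum_eq_zero_iff_of_nonpos (f := fun j =>
        ((b j) ^ 2 - (b i0) ^ 2) / ((b j - b i0) ^ 2))
        (s := Finset.univ.filter (fun j => b j ≠ b i0)) ?_ |>.mp (h i0)
      · have hj : j ∈ Finset.univ.filter (fun j => b j ≠ b i0) := by
          simp [hbj]
        have := hall j hj
        have hden : (b j - b i0) ^ 2 ≠ 0 := pow_ne_zero _ (sub_ne_zero.mpr hbj)
        have := div_eq_zero_iff.mp this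
        rcases this with h1 | h1
        · linarith
        · exact absurd h1 hden
      · intro k hk
        apply div_nonpos_of_nonpos_of_nonneg
        · have := hi0 k (Finset.mem_univ k)
          linarith
        · positivity
  constructor
  · intro i j; rw [key i, key j]
  · intro i j
    have : b i ^ 2 = b j ^ 2 := (key i).trans (key j).symm
    exact sq_eq_sq_iff_eq_or_eq_neg.mp this
end

section
/- Let t ≥ 3, let b : Fin t → ℝ be strictly increasing, let ε, d : ℝ, define a k = ε * (b k) + d and R k l = (b k) * (b l) + (a k) + (a l). Assume: (i) R k (k+1) ≥ 0 for all k with k+1 < t; (ii) R 0 (t−1) ≤ 0; (iii) for every k, ∑_{m ≠ k} (R k m) / ((b k) − (b m)) = 0. Then ε^2 − 2*d < 0. -/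
theorem stmt_7 (t : ℕ) (ht : 3 ≤ t) (b : Fin t → ℝ) (hb : StrictMono b)
    (ε d : ℝ) (a : Fin t → ℝ) (ha : ∀ k, a k = ε * b k + d)
    (R : Fin t → Fin t → ℝ) (hRdef : ∀ k l, R k l = b k * b l + a k + a l)
    (hconsec : ∀ k : ℕ, (h : k + 1 < t) →
      0 ≤ R ⟨k, Nat.lt_of_succ_lt h⟩ ⟨k + 1, h⟩)
    (hext : R ⟨0, by omega⟩ ⟨t - 1, by omega⟩ ≤ 0)
    (hcartan : ∀ k : Fin t,
      ∑ m ∈ Finset.univ.filter (fun m => m ≠ k), R k m / (b k - b m) = 0) :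
    ε ^ 2 - 2 * d < 0 := by
  classical
  by_contra hcon
  push_neg at hcon
  set c : Fin t → ℝ := fun k => b k + ε with hc
  set D : ℝ := 2 * d - ε ^ 2 with hDdef
  have hD0 : D ≤ 0 := by rw [hDdef]; linarith
  have hRc : ∀ k l, R k l = c k * c l + D := by
    intro k l
    rw [hRdef, ha, ha]
    simp only [hc, hDdef]
    ring
  have hmono : ∀ {i j : Fin t}, (i : ℕ) < (j : ℕ) → c i < c j := by
    intro i j h
    have := hb (show i < j from h)
    simp only [hc]
    linarith
  have hceq : ∀ (n m : ℕ) (hn : n < t) (hm : m < t), n = m →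
      c ⟨n, hn⟩ = c ⟨m, hm⟩ := by
    intro n m hn hm h; subst h; rfl
  have hcons : ∀ k : ℕ, (h : k + 1 < t) →
      0 ≤ c ⟨k, Nat.lt_of_succ_lt h⟩ * c ⟨k + 1, h⟩ + D := by
    intro k h
    have := hconsec k h
    rwa [hRc] at this
  have hext' : c ⟨0, by omega⟩ * c ⟨t - 1, by omega⟩ + D ≤ 0 := by
    have := hext
    rwa [hRc] at this
  have keypos : ∀ k : Fin t,
      (∀ m : Fin t, m ≠ k → 0 ≤ R k m / (b k - b m)) →
      (∃ m : Fin t, m ≠ k ∧ 0 < R k m / (b k - b m)) → False := by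
    rintro k hpos ⟨m, hm, hms⟩
    have hsum := hcartan k
    have h2 : 0 < ∑ m ∈ Finset.univ.filter (fun m => m ≠ k), R k m / (b k - b m) :=
      Finset.sum_pos' (fun i hi => hpos i (Finset.mem_filter.mp hi).2)
        ⟨m, Finset.mem_filter.mpr ⟨Finset.mem_univ m, hm⟩, hms⟩
    linarith
  have keyneg : ∀ k : Fin t,
      (∀ m : Fin t, m ≠ k → R k m / (b k - b m) ≤ 0) →
      (∃ m : Fin t, m ≠ k ∧ R k m / (b k - b m) < 0) → False := by
    rintro k hneg ⟨m, hm, hms⟩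
    have hsum := hcartan k
    have h2 : ∑ m ∈ Finset.univ.filter (fun m => m ≠ k), R k m / (b k - b m) < 0 :=
      Finset.sum_neg' (fun i hi => hneg i (Finset.mem_filter.mp hi).2)
        ⟨m, Finset.mem_filter.mpr ⟨Finset.mem_univ m, hm⟩, hms⟩
    linarith
  have hdenneg : ∀ {i j : Fin t}, (i : ℕ) < (j : ℕ) → b i - b j < 0 := by
    intro i j h
    have := hb (show i < j from h)
    linarith
  have hdenpos : ∀ {i j : Fin t}, (j : ℕ) < (i : ℕ) → 0 < b i - b j := by
    intro i j h
    have := hb (show j < i from h)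
    linarith
  rcases lt_or_eq_of_le hD0 with hDlt | hDeq
  · -- Case D < 0 : sign propagation, no Cartan needed
    have h01 : 0 ≤ c ⟨0, by omega⟩ * c ⟨1, by omega⟩ + D := hcons 0 (by omega)
    rcases lt_trichotomy (c ⟨0, by omega⟩) 0 with hc0 | hc0 | hc0
    · -- all negative
      have allneg : ∀ k, (hk : k < t) → c ⟨k, hk⟩ < 0 := by
        intro k
        induction k with
        | zero => intro hk; exact hc0
        | succ n ih =>
          intro hk
          have hn : n < t := by omega
          have hcn := ih hn
          have hp := hcons n hk
          by_contra hpos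
          push_neg at hpos
          nlinarith
      have h1 : 0 ≤ c ⟨t - 2, by omega⟩ * c ⟨t - 2 + 1, by omega⟩ + D :=
        hcons (t - 2) (by omega)
      rw [hceq (t - 2 + 1) (t - 1) (by omega) (by omega) (by omega)] at h1
      have h2 : c ⟨0, by omega⟩ < c ⟨t - 2, by omega⟩ :=
        hmono (show 0 < t - 2 by omega)
      have h3 := allneg (t - 1) (by omega)
      nlinarith
    · rw [hc0, zero_mul] at h01; linarith
    · -- all positive
      have h2 : c ⟨1, by omega⟩ < c ⟨t - 1, by omega⟩ :=
        hmono (show 1 < t - 1 by omega)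
      nlinarith [hext', h01, hc0, h2]
  · -- Case D = 0
    have hRc0 : ∀ k l, R k l = c k * c l := by
      intro k l; rw [hRc, hDeq, add_zero]
    rcases lt_trichotomy (c ⟨0, by omega⟩) 0 with hc0 | hc0 | hc0
    · rcases lt_trichotomy (c ⟨t - 1, by omega⟩) 0 with hct | hct | hct
      · -- all c negative; Cartan at t-1 : all terms positive
        set k : Fin t := ⟨t - 1, by omega⟩ with hk
        have hterm : ∀ m : Fin t, m ≠ k → 0 < R k m / (b k - b m) := by
          intro m hm
          have hmk : (m : ℕ) ≠ t - 1 := Fin.val_ne_of_ne hm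
          have hmlt : (m : ℕ) < (k : ℕ) := show (m : ℕ) < t - 1 by
            have := m.isLt; omega
          have hcm : c m < 0 := lt_trans (hmono hmlt) hct
          rw [hRc0]
          exact div_pos (mul_pos_of_neg_of_neg hct hcm) (hdenpos hmlt)
        refine keypos k (fun m hm => le_of_lt (hterm m hm)) ?_
        have hne : (⟨0, by omega⟩ : Fin t) ≠ k :=
          Fin.ne_of_val_ne (show 0 ≠ t - 1 by omega)
        exact ⟨⟨0, by omega⟩, hne, hterm _ hne⟩
      · -- c (t-1) = 0 ; Cartan at t-2 : all terms nonneg, one positive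
        set k : Fin t := ⟨t - 2, by omega⟩ with hk
        have hck : c k < 0 := by
          have := hmono (show ((k : ℕ)) < ((⟨t - 1, by omega⟩ : Fin t) : ℕ) from
            show t - 2 < t - 1 by omega)
          rw [hct] at this
          exact this
        have hterm : ∀ m : Fin t, m ≠ k → 0 ≤ R k m / (b k - b m) := by
          intro m hm
          have hmk : (m : ℕ) ≠ t - 2 := Fin.val_ne_of_ne hm
          rcases lt_or_gt_of_ne hmk with hlt | hgt
          · have hcm : c m < 0 := lt_trans (hmono (show (m : ℕ) < (k : ℕ) from hlt)) hck
            rw [hRc0]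
            exact le_of_lt (div_pos (mul_pos_of_neg_of_neg hck hcm)
              (hdenpos (show (m : ℕ) < (k : ℕ) from hlt)))
          · have hmeq : (m : ℕ) = t - 1 := by have := m.isLt; omega
            have hcm : c m = 0 := by
              rw [show m = ⟨t - 1, by omega⟩ from Fin.ext hmeq]; exact hct
            rw [hRc0, hcm, mul_zero, zero_div]
        have hne : (⟨0, by omega⟩ : Fin t) ≠ k :=
          Fin.ne_of_val_ne (show 0 ≠ t - 2 by omega)
        refine keypos k hterm ⟨⟨0, by omega⟩, hne, ?_⟩
        rw [hRc0]
        exact div_pos (mul_pos_of_neg_of_neg hck hc0)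
          (hdenpos (show 0 < t - 2 by omega))
      · -- c 0 < 0 < c (t-1) : find least index with 0 ≤ c
        have hex : ∃ n, ∃ hn : n < t, 0 ≤ c ⟨n, hn⟩ := ⟨t - 1, by omega, le_of_lt hct⟩
        have hspec := Nat.find_spec hex
        set i0 := Nat.find hex with hi0
        obtain ⟨hi0t, hi0nn⟩ := hspec
        have hmin : ∀ m, m < i0 → (hm : m < t) → c ⟨m, hm⟩ < 0 := by
          intro m hmi hm
          have := Nat.find_min hex hmi
          push_neg at this
          exact this hm
        have hi0pos : 0 < i0 := by
          rcases Nat.eq_zero_or_pos i0 with h | h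
          · exfalso
            rw [hceq i0 0 hi0t (by omega) h] at hi0nn
            linarith
          · exact h
        set j := i0 - 1 with hj
        have hjt : j + 1 < t := by omega
        have hcj : c ⟨j, by omega⟩ < 0 := hmin j (by omega) (by omega)
        have hci0 : c ⟨i0, hi0t⟩ = 0 := by
          have hp := hcons j hjt
          rw [hceq (j + 1) i0 hjt hi0t (by omega)] at hp
          rw [← hDeq] at hp
          nlinarith
        set k : Fin t := ⟨j, by omega⟩ with hk
        have hkval : (k : ℕ) = j := rfl
        have hterm : ∀ m : Fin t, m ≠ k → 0 ≤ R k m / (b k - b m) := by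
          intro m hm
          have hmk : (m : ℕ) ≠ j := Fin.val_ne_of_ne hm
          rcases lt_trichotomy ((m : ℕ)) i0 with hlt | heq | hgt
          · have hmj : (m : ℕ) < j := by omega
            have hcm : c m < 0 := hmin m (by omega) m.isLt
            rw [hRc0]
            exact le_of_lt (div_pos (mul_pos_of_neg_of_neg hcj hcm)
              (hdenpos (show (m : ℕ) < (k : ℕ) from hmj)))
          · have hcm : c m = 0 := by
              rw [show m = ⟨i0, hi0t⟩ from Fin.ext heq]; exact hci0
            rw [hRc0, hcm, mul_zero, zero_div]
          · have hcm : 0 < c m := by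
              have := hmono (show ((⟨i0, hi0t⟩ : Fin t) : ℕ) < (m : ℕ) from hgt)
              rw [hci0] at this
              exact this
            rw [hRc0]
            exact le_of_lt (div_pos_of_neg_of_neg (mul_neg_of_neg_of_pos hcj hcm)
              (hdenneg (show (k : ℕ) < (m : ℕ) by omega)))
        -- strict witness: an index other than j and i0
        by_cases hj0 : j = 0
        · have hw : (⟨2, by omega⟩ : Fin t) ≠ k :=
            Fin.ne_of_val_ne (show 2 ≠ j by omega)
          refine keypos k hterm ⟨⟨2, by omega⟩, hw, ?_⟩
          have hgt : i0 < 2 := by omega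
          have hcm : 0 < c ⟨2, by omega⟩ := by
            have := hmono (show ((⟨i0, hi0t⟩ : Fin t) : ℕ) < ((⟨2, by omega⟩ : Fin t) : ℕ) from hgt)
            rw [hci0] at this
            exact this
          rw [hRc0]
          exact div_pos_of_neg_of_neg (mul_neg_of_neg_of_pos hcj hcm)
            (hdenneg (show (k : ℕ) < 2 by omega))
        · have hw : (⟨0, by omega⟩ : Fin t) ≠ k :=
            Fin.ne_of_val_ne (show 0 ≠ j by omega)
          refine keypos k hterm ⟨⟨0, by omega⟩, hw, ?_⟩
          have hcm : c ⟨0, by omega⟩ < 0 := hc0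
          rw [hRc0]
          exact div_pos (mul_pos_of_neg_of_neg hcj hcm)
            (hdenpos (show 0 < j by omega))
    · -- c 0 = 0 ; Cartan at 1 : all terms nonpos, one negative
      set k : Fin t := ⟨1, by omega⟩ with hk
      have hkval : (k : ℕ) = 1 := rfl
      have hck : 0 < c k := by
        have h := hmono (i := (⟨0, by omega⟩ : Fin t)) (j := k) Nat.one_pos
        rw [hc0] at h
        exact h
      have hterm : ∀ m : Fin t, m ≠ k → R k m / (b k - b m) ≤ 0 := by
        intro m hm
        have hmk : (m : ℕ) ≠ 1 := Fin.val_ne_of_ne hm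
        rcases lt_or_gt_of_ne hmk with hlt | hgt
        · have hm0 : (m : ℕ) = 0 := by omega
          have hcm : c m = 0 := by
            rw [show m = ⟨0, by omega⟩ from Fin.ext hm0]; exact hc0
          rw [hRc0, hcm, mul_zero, zero_div]
        · have hcm : 0 < c m := lt_trans hck (hmono hgt)
          rw [hRc0]
          exact le_of_lt (div_neg_of_pos_of_neg (mul_pos hck hcm) (hdenneg hgt))
      have hne : (⟨2, by omega⟩ : Fin t) ≠ k :=
        Fin.ne_of_val_ne (show 2 ≠ 1 by omega)
      refine keyneg k hterm ⟨⟨2, by omega⟩, hne, ?_⟩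
      have hcm : 0 < c ⟨2, by omega⟩ :=
        lt_trans hck (hmono (i := k) (j := ⟨2, by omega⟩) (show 1 < 2 by omega))
      rw [hRc0]
      exact div_neg_of_pos_of_neg (mul_pos hck hcm)
        (hdenneg (show 1 < 2 by omega))
    · -- 0 < c 0 ; Cartan at 0 : all terms negative
      set k : Fin t := ⟨0, by omega⟩ with hk
      have hkval : (k : ℕ) = 0 := rfl
      have hterm : ∀ m : Fin t, m ≠ k → R k m / (b k - b m) < 0 := by
        intro m hm
        have hmk : (m : ℕ) ≠ 0 := Fin.val_ne_of_ne hm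
        have hgt : (k : ℕ) < (m : ℕ) := by omega
        have hcm : 0 < c m := lt_trans hc0 (hmono hgt)
        rw [hRc0]
        exact div_neg_of_pos_of_neg (mul_pos hc0 hcm) (hdenneg hgt)
      have hne : (⟨1, by omega⟩ : Fin t) ≠ k :=
        Fin.ne_of_val_ne (show 1 ≠ 0 by omega)
      exact keyneg k (fun m hm => le_of_lt (hterm m hm)) ⟨⟨1, by omega⟩, hne, hterm _ hne⟩
end

section
/- Let b : Fin n → ℝ and let T : Fin n → Fin n → Fin n → ℝ be fully symmetric (invariant under all permutations of its three indices) with T i j k = 0 whenever at least two of b i, b j, b k are equal. Suppose that for all i, j with b i ≠ b j, ∑_{k : b k ≠ b i ∧ b k ≠ b j} (T i j k)^2 / ((b k − b i) * (b k − b j)) ≤ 0. Then T i j k = 0 for all i, j, k. -/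
theorem stmt_10 (n : ℕ) (b : Fin n → ℝ) (T : Fin n → Fin n → Fin n → ℝ)
    (hsym : ∀ (i j k : Fin n) (σ : Equiv.Perm (Fin 3)),
      T i j k = T (![i, j, k] (σ 0)) (![i, j, k] (σ 1)) (![i, j, k] (σ 2)))
    (hvanish : ∀ i j k, b i = b j ∨ b j = b k ∨ b i = b k → T i j k = 0)
    (hcurv : ∀ i j, b i ≠ b j →
      ∑ k ∈ Finset.univ.filter (fun k => b k ≠ b i ∧ b k ≠ b j),
        (T i j k) ^ 2 / ((b k - b i) * (b k - b j)) ≤ 0) :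
    ∀ i j k, T i j k = 0 := by
  -- symmetry helpers
  have sw12 : ∀ i j k, T i j k = T i k j := by
    intro i j k
    have := hsym i j k (Equiv.swap 1 2)
    have h0 : (Equiv.swap (1 : Fin 3) 2) 0 = 0 := by decide
    simpa [h0] using this
  have cyc : ∀ i j k, T i j k = T j k i := by
    intro i j k
    have := hsym i j k (⟨![1, 2, 0], ![2, 0, 1], by decide, by decide⟩ : Equiv.Perm (Fin 3))
    simpa using this
  -- rank function
  set r : ℝ → ℕ := fun x => (Finset.univ.filter (fun t => b t < x)).card with hr
  have rlt : ∀ i j : Fin n, b i < b j → r (b i) < r (b j) := by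
    intro i j hij
    apply Finset.card_lt_card
    rw [Finset.ssubset_iff_of_subset]
    · exact ⟨i, by simpa using hij, by simp⟩
    · intro t ht
      simp only [Finset.mem_filter, Finset.mem_univ, true_and] at ht ⊢
      exact ht.trans hij
  -- main lemma by strong induction on rank sum
  have main : ∀ N : ℕ, ∀ i j : Fin n, r (b i) + r (b j) = N → b i ≠ b j →
      ∀ k, T i j k = 0 := by
    intro N
    induction N using Nat.strong_induction_on with
    | _ N IH =>
      intro i j hN hij k
      -- every term of the curvature sum is nonneg
      have hnonneg : ∀ m ∈ Finset.univ.filter (fun m => b m ≠ b i ∧ b m ≠ b j),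
          0 ≤ (T i j m) ^ 2 / ((b m - b i) * (b m - b j)) := by
        intro m hm
        simp only [Finset.mem_filter, Finset.mem_univ, true_and] at hm
        rcases lt_trichotomy ((b m - b i) * (b m - b j)) 0 with hd | hd | hd
        · -- denominator negative: b m strictly between, use IH
          have hT : T i j m = 0 := by
            rcases mul_neg_iff.mp hd with ⟨h1, h2⟩ | ⟨h1, h2⟩
            · -- b i < b m < b j
              have him : b i < b m := by linarith [sub_pos.mp h1]
              have hmj : b m < b j := by linarith [sub_neg.mp h2]
              have hlt : r (b i) + r (b m) < N := by
                have := rlt m j hmj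
                omega
              have := IH _ hlt i m rfl (ne_of_lt him) j
              rw [sw12]; exact this
            · -- b j < b m < b i
              have hjm : b j < b m := by linarith [sub_pos.mp h2]
              have hmi : b m < b i := by linarith [sub_neg.mp h1]
              have hlt : r (b j) + r (b m) < N := by
                have := rlt m i hmi
                omega
              have := IH _ hlt j m rfl (ne_of_lt hjm) i
              rw [cyc]; exact this
          simp [hT]
        · simp [hd]
        · positivity
      have hsum : ∑ m ∈ Finset.univ.filter (fun m => b m ≠ b i ∧ b m ≠ b j),
          (T i j m) ^ 2 / ((b m - b i) * (b m - b j)) = 0 :=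
        le_antisymm (hcurv i j hij) (Finset.sum_nonneg hnonneg)
      by_cases hk : b k ≠ b i ∧ b k ≠ b j
      · have hmem : k ∈ Finset.univ.filter (fun m => b m ≠ b i ∧ b m ≠ b j) := by
          simp [hk.1, hk.2]
        have hterm := (Finset.sum_eq_zero_iff_of_nonneg hnonneg).mp hsum k hmem
        have hd : (b k - b i) * (b k - b j) ≠ 0 :=
          mul_ne_zero (sub_ne_zero_of_ne hk.1) (sub_ne_zero_of_ne hk.2)
        rcases div_eq_zero_iff.mp hterm with h | h
        · exact pow_eq_zero_iff (by norm_num) |>.mp h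
        · exact absurd h hd
      · push_neg at hk
        by_cases h1 : b k = b i
        · exact hvanish i j k (Or.inr (Or.inr h1.symm))
        · exact hvanish i j k (Or.inr (Or.inl (hk h1).symm))
  intro i j k
  by_cases hij : b i = b j
  · exact hvanish i j k (Or.inl hij)
  · exact main _ i j rfl hij k
end
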